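/- Let f be a symmetric piecewise-constant density on ℝ with f(z) = p_{|i|}/Δ for z in the interval I_i = ((i-½)Δ, (i+½)Δ) for |i| < N, and f(z) = (p_N/Δ) r^{|i|-N} on I_i for |i| ≥ N, where Δ > 0, r ∈ (0,1), and the normalization p₀ + 2Σ_{j=1}^{N-1} p_j + 2p_N/(1-r) = 1 holds. Then a random variable Z with density f has mean 0 and Var(Z) = Δ²/12 + 2Δ² Σ_{i=1}^{N-1} p_i i² + 2 p_N Δ² (r²(N-1)² + N²(1-2r) + r(2N+1))/(1-r)³. -/

import Mathlib

open MeasureTheory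

lemma aux_hasSum_sq_geom {r : ℝ} (h0 : 0 < r) (h1 : r < 1) :
    HasSum (fun n : ℕ => (n : ℝ) ^ 2 * r ^ n) (r * (1 + r) / (1 - r) ^ 3) := by
  have hr : ‖r‖ < 1 := by rw [Real.norm_eq_abs, abs_of_pos h0]; exact h1
  have hS : Summable (fun n : ℕ => (n : ℝ) ^ 2 * r ^ n) :=
    summable_pow_mul_geometric_of_norm_lt_one 2 hr
  set s := ∑' n : ℕ, (n : ℝ) ^ 2 * r ^ n with hs
  have h1r : (1 : ℝ) - r ≠ 0 := by intro h; nlinarith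
  have hsum : HasSum (fun n : ℕ => (n : ℝ) ^ 2 * r ^ n) s := hS.hasSum
  have hshift : HasSum (fun n : ℕ => ((n : ℝ) + 1) ^ 2 * r ^ (n + 1)) s := by
    have := (hasSum_nat_add_iff (f := fun n : ℕ => (n : ℝ) ^ 2 * r ^ n) 1
      (g := s - ∑ i ∈ Finset.range 1, (i : ℝ) ^ 2 * r ^ i)).mpr
    simp only [Finset.range_one, Finset.sum_singleton, Nat.cast_zero] at this
    have h2 := this (by simpa using hsum)
    simpa [add_comm] using h2
  have hgeo : HasSum (fun n : ℕ => r ^ n) (1 - r)⁻¹ := hasSum_geometric_of_lt_one h0.le h1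
  have hlin : HasSum (fun n : ℕ => (n : ℝ) * r ^ n) (r / (1 - r) ^ 2) :=
    hasSum_coe_mul_geometric_of_norm_lt_one hr
  have hcomb : HasSum (fun n : ℕ => r * ((n : ℝ) ^ 2 * r ^ n) + (2 * r) * ((n : ℝ) * r ^ n)
      + r * r ^ n) (r * s + (2 * r) * (r / (1 - r) ^ 2) + r * (1 - r)⁻¹) :=
    ((hsum.mul_left r).add (hlin.mul_left (2 * r))).add (hgeo.mul_left r)
  have heq : (fun n : ℕ => ((n : ℝ) + 1) ^ 2 * r ^ (n + 1)) =
      fun n : ℕ => r * ((n : ℝ) ^ 2 * r ^ n) + (2 * r) * ((n : ℝ) * r ^ n) + r * r ^ n := by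
    funext n; ring
  rw [heq] at hshift
  have hval : s = r * s + (2 * r) * (r / (1 - r) ^ 2) + r * (1 - r)⁻¹ :=
    hshift.unique hcomb
  have : s = r * (1 + r) / (1 - r) ^ 3 := by
    field_simp at hval ⊢
    nlinarith [hval]
  exact this ▸ hsum

noncomputable def pcC (N : ℕ) (r Δ : ℝ) (p : ℕ → ℝ) (i : ℤ) : ℝ :=
  (if i.natAbs < N then p i.natAbs else p N * r ^ (i.natAbs - N)) / Δ

def pcS (Δ : ℝ) (i : ℤ) : Set ℝ :=
  Set.Ioo (((i : ℝ) - 1 / 2) * Δ) (((i : ℝ) + 1 / 2) * Δ)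

noncomputable def pcG (N : ℕ) (r Δ : ℝ) (p : ℕ → ℝ) (i : ℤ) : ℝ :=
  pcC N r Δ p i * (((i : ℝ)) ^ 2 + 1 / 12) * Δ ^ 3

lemma pcC_symm (N : ℕ) (r Δ : ℝ) (p : ℕ → ℝ) (i : ℤ) :
    pcC N r Δ p (-i) = pcC N r Δ p i := by simp [pcC]

lemma pcC_nonneg (N : ℕ) {r Δ : ℝ} (hr0 : 0 < r) (hΔ : 0 < Δ) {p : ℕ → ℝ}
    (hp : ∀ j, 0 ≤ p j) (i : ℤ) : 0 ≤ pcC N r Δ p i := by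
  unfold pcC; split
  · exact div_nonneg (hp _) hΔ.le
  · exact div_nonneg (mul_nonneg (hp _) (pow_nonneg hr0.le _)) hΔ.le

lemma pcG_symm (N : ℕ) (r Δ : ℝ) (p : ℕ → ℝ) (i : ℤ) :
    pcG N r Δ p (-i) = pcG N r Δ p i := by
  simp [pcG, pcC_symm]

lemma pcS_disjoint {Δ : ℝ} (hΔ : 0 < Δ) : Pairwise (Function.onFun Disjoint (pcS Δ)) := by
  have key : ∀ i j : ℤ, i < j → Disjoint (pcS Δ i) (pcS Δ j) := by
    intro i j hij
    rw [pcS, pcS, Set.Ioo_disjoint_Ioo]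
    have h1 : (i : ℝ) + 1 ≤ (j : ℝ) := by exact_mod_cast hij
    have h2 : ((i : ℝ) + 1 / 2) * Δ ≤ ((j : ℝ) - 1 / 2) * Δ := by nlinarith
    calc min (((i : ℝ) + 1 / 2) * Δ) (((j : ℝ) + 1 / 2) * Δ)
        ≤ ((i : ℝ) + 1 / 2) * Δ := min_le_left _ _
      _ ≤ ((j : ℝ) - 1 / 2) * Δ := h2
      _ ≤ max (((i : ℝ) - 1 / 2) * Δ) (((j : ℝ) - 1 / 2) * Δ) := le_max_right _ _
  intro i j hij
  rcases lt_or_gt_of_ne hij with h | h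
  · exact key _ _ h
  · exact (key _ _ h).symm

lemma pcS_ae_cover {Δ : ℝ} (hΔ : 0 < Δ) : ∀ᵐ z : ℝ, z ∈ ⋃ i, pcS Δ i := by
  have hΔ' : Δ ≠ 0 := hΔ.ne'
  have hsub : (⋃ i, pcS Δ i)ᶜ ⊆ Set.range (fun i : ℤ => ((i : ℝ) - 1 / 2) * Δ) := by
    intro z hz
    set i := ⌊z / Δ + 1 / 2⌋ with hi
    have h1 : (i : ℝ) ≤ z / Δ + 1 / 2 := Int.floor_le _
    have h2 : z / Δ + 1 / 2 < i + 1 := Int.lt_floor_add_one _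
    have hzz : z / Δ * Δ = z := div_mul_cancel₀ z hΔ'
    have hlow : ((i : ℝ) - 1 / 2) * Δ ≤ z := by nlinarith
    have hup : z < ((i : ℝ) + 1 / 2) * Δ := by nlinarith
    rcases hlow.eq_or_lt with h | h
    · exact ⟨i, h⟩
    · have hmem : z ∈ pcS Δ i := by rw [pcS]; exact ⟨h, hup⟩
      exact absurd (Set.mem_iUnion.mpr ⟨i, hmem⟩) hz
  refine (ae_iff.mpr ?_)
  exact measure_mono_null hsub ((Set.countable_range _).measure_zero _)
lemma pc_hasSum (N : ℕ) (hN : 1 ≤ N) {r : ℝ} (hr0 : 0 < r) (hr1 : r < 1)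
    {Δ : ℝ} (hΔ : 0 < Δ) (p : ℕ → ℝ) (hp : ∀ j, 0 ≤ p j)
    (hnorm : p 0 + 2 * ∑ j ∈ Finset.Icc 1 (N - 1), p j + 2 * p N / (1 - r) = 1) :
    HasSum (pcG N r Δ p)
      (Δ ^ 2 / 12 + 2 * Δ ^ 2 * ∑ i ∈ Finset.Icc 1 (N - 1), p i * (i : ℝ) ^ 2
        + 2 * p N * Δ ^ 2 * (r ^ 2 * ((N : ℝ) - 1) ^ 2 + (N : ℝ) ^ 2 * (1 - 2 * r)
            + r * (2 * (N : ℝ) + 1)) / (1 - r) ^ 3) := by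
  have hΔ' : Δ ≠ 0 := hΔ.ne'
  have h1r : (0 : ℝ) < 1 - r := by linarith
  have hnr : ‖r‖ < 1 := by rw [Real.norm_eq_abs, abs_of_pos hr0]; exact hr1
  -- tail term values
  set T : ℝ := (p N * Δ ^ 2) * (r * (1 + r) / (1 - r) ^ 3)
      + (p N * Δ ^ 2 * (2 * N)) * (r / (1 - r) ^ 2)
      + (p N * Δ ^ 2 * ((N : ℝ) ^ 2 + 1 / 12)) * (1 - r)⁻¹ with hT
  have htg : ∀ k : ℕ, pcG N r Δ p ((k : ℤ) + N) =
      (p N * Δ ^ 2) * ((k : ℝ) ^ 2 * r ^ k)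
      + (p N * Δ ^ 2 * (2 * N)) * ((k : ℝ) * r ^ k)
      + (p N * Δ ^ 2 * ((N : ℝ) ^ 2 + 1 / 12)) * r ^ k := by
    intro k
    have h1 : ((k : ℤ) + N) = ((k + N : ℕ) : ℤ) := by push_cast; ring
    unfold pcG pcC
    rw [h1, Int.natAbs_natCast, if_neg (by omega)]
    have h2 : k + N - N = k := by omega
    rw [h2]
    push_cast
    field_simp
    ring
  have Htail : HasSum (fun k : ℕ => pcG N r Δ p ((k : ℤ) + N)) T := by
    have h := (((aux_hasSum_sq_geom hr0 hr1).mul_left (p N * Δ ^ 2)).add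
      ((hasSum_coe_mul_geometric_of_norm_lt_one hnr).mul_left (p N * Δ ^ 2 * (2 * N)))).add
      ((hasSum_geometric_of_lt_one hr0.le hr1).mul_left (p N * Δ ^ 2 * ((N : ℝ) ^ 2 + 1 / 12)))
    have hfe : (fun k : ℕ => pcG N r Δ p ((k : ℤ) + N)) =
        fun k : ℕ => (p N * Δ ^ 2) * ((k : ℝ) ^ 2 * r ^ k)
          + (p N * Δ ^ 2 * (2 * N)) * ((k : ℝ) * r ^ k)
          + (p N * Δ ^ 2 * ((N : ℝ) ^ 2 + 1 / 12)) * r ^ k := funext htg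
    rw [hfe, hT]
    convert h using 2 <;> try ring
  set A : ℝ := T + ∑ i ∈ Finset.range N, pcG N r Δ p (i : ℤ) with hA
  have Hnat : HasSum (fun n : ℕ => pcG N r Δ p (n : ℤ)) A := by
    have h' : HasSum (fun n : ℕ => pcG N r Δ p ((n + N : ℕ) : ℤ)) T := by
      have hfe : (fun n : ℕ => pcG N r Δ p ((n + N : ℕ) : ℤ)) =
          fun n : ℕ => pcG N r Δ p ((n : ℤ) + N) := by
        funext n; congr 1; try omega
      rw [hfe]; exact Htail
    exact (hasSum_nat_add_iff N).mp h'
  have Hneg : HasSum (fun n : ℕ => pcG N r Δ p (-((n : ℤ) + 1))) (A - pcG N r Δ p 0) := by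
    have h1 : HasSum (fun n : ℕ => pcG N r Δ p ((n + 1 : ℕ) : ℤ))
        (A - ∑ i ∈ Finset.range 1, pcG N r Δ p (i : ℤ)) := (hasSum_nat_add_iff' 1).mpr Hnat
    rw [Finset.sum_range_one] at h1
    have hfe : (fun n : ℕ => pcG N r Δ p (-((n : ℤ) + 1))) =
        fun n : ℕ => pcG N r Δ p ((n + 1 : ℕ) : ℤ) := by
      funext n
      rw [show -((n : ℤ) + 1) = -(((n + 1 : ℕ) : ℤ)) from by push_cast; ring, pcG_symm]
    rw [hfe]
    exact_mod_cast h1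
  have HZ : HasSum (pcG N r Δ p) (A + (A - pcG N r Δ p 0)) :=
    Hnat.of_nat_of_neg_add_one Hneg
  -- now identify the value
  have hg0 : pcG N r Δ p 0 = p 0 * Δ ^ 2 / 12 := by
    unfold pcG pcC
    rw [Int.natAbs_zero, if_pos (by omega)]
    push_cast
    field_simp
    ring
  have hsum_range : ∑ i ∈ Finset.range N, pcG N r Δ p (i : ℤ)
      = ∑ i ∈ Finset.range N, p i * ((i : ℝ) ^ 2 + 1 / 12) * Δ ^ 2 := by
    refine Finset.sum_congr rfl fun n hn => ?_
    unfold pcG pcC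
    rw [Int.natAbs_natCast, if_pos (Finset.mem_range.mp hn)]
    push_cast
    field_simp
  have hsplit : ∀ u : ℕ → ℝ,
      ∑ n ∈ Finset.range N, u n = u 0 + ∑ n ∈ Finset.Icc 1 (N - 1), u n := by
    intro u
    have hN1 : N - 1 + 1 = N := by omega
    have e1 : Finset.Icc 1 (N - 1) = Finset.Ico 1 N := by ext x; simp only [Finset.mem_Icc, Finset.mem_Ico]; omega
    rw [Finset.range_eq_Ico, ← Finset.sum_Ico_consecutive u (Nat.zero_le 1) hN, e1,
      Nat.Ico_zero_eq_range, Finset.sum_range_one]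
  have hIcc : ∑ n ∈ Finset.Icc 1 (N - 1), p n * ((n : ℝ) ^ 2 + 1 / 12) * Δ ^ 2
      = Δ ^ 2 * ∑ n ∈ Finset.Icc 1 (N - 1), p n * (n : ℝ) ^ 2
        + Δ ^ 2 / 12 * ∑ n ∈ Finset.Icc 1 (N - 1), p n := by
    rw [Finset.mul_sum, Finset.mul_sum, ← Finset.sum_add_distrib]
    exact Finset.sum_congr rfl fun n _ => by ring
  have hval : A + (A - pcG N r Δ p 0)
      = Δ ^ 2 / 12 + 2 * Δ ^ 2 * ∑ i ∈ Finset.Icc 1 (N - 1), p i * (i : ℝ) ^ 2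
        + 2 * p N * Δ ^ 2 * (r ^ 2 * ((N : ℝ) - 1) ^ 2 + (N : ℝ) ^ 2 * (1 - 2 * r)
            + r * (2 * (N : ℝ) + 1)) / (1 - r) ^ 3 := by
    rw [hA, hsum_range, hsplit (fun n => p n * ((n : ℝ) ^ 2 + 1 / 12) * Δ ^ 2), hIcc, hg0, hT]
    set P1 : ℝ := ∑ n ∈ Finset.Icc 1 (N - 1), p n with hP1
    set P2 : ℝ := ∑ n ∈ Finset.Icc 1 (N - 1), p n * (n : ℝ) ^ 2 with hP2
    have hnorm2 : 2 * p N = (1 - p 0 - 2 * P1) * (1 - r) := by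
      have h : 2 * p N / (1 - r) = 1 - p 0 - 2 * P1 := by
        rw [hP1]; linarith [hnorm]
      rwa [div_eq_iff h1r.ne'] at h
    have hpN : p N = (1 - p 0 - 2 * P1) * (1 - r) / 2 := by linarith [hnorm2]
    rw [hpN]
    field_simp
    ring
  rw [← hval]
  exact HZ
/-- Mean and variance of the symmetric piecewise-constant density with geometric tails. -/
theorem piecewise_constant_mean_variance (N : ℕ) (hN : 1 ≤ N) (r : ℝ) (hr0 : 0 < r) (hr1 : r < 1)
    (Δ : ℝ) (hΔ : 0 < Δ) (p : ℕ → ℝ) (hp : ∀ j, 0 ≤ p j)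
    (hnorm : p 0 + 2 * ∑ j ∈ Finset.Icc 1 (N - 1), p j + 2 * p N / (1 - r) = 1)
    (f : ℝ → ℝ)
    (hf : ∀ (i : ℤ) (z : ℝ), z ∈ Set.Ioo (((i : ℝ) - 1 / 2) * Δ) (((i : ℝ) + 1 / 2) * Δ) →
      f z = (if i.natAbs < N then p i.natAbs else p N * r ^ (i.natAbs - N)) / Δ) :
    (∫ z : ℝ, z * f z) = 0 ∧
    Integrable (fun z : ℝ => z ^ 2 * f z) ∧
    (∫ z : ℝ, z ^ 2 * f z)
      = Δ ^ 2 / 12 + 2 * Δ ^ 2 * ∑ i ∈ Finset.Icc 1 (N - 1), p i * (i : ℝ) ^ 2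
        + 2 * p N * Δ ^ 2 * (r ^ 2 * ((N : ℝ) - 1) ^ 2 + (N : ℝ) ^ 2 * (1 - 2 * r)
            + r * (2 * (N : ℝ) + 1)) / (1 - r) ^ 3 := by
  have hΔ' : Δ ≠ 0 := hΔ.ne'
  have hfc : ∀ (i : ℤ) (z : ℝ), z ∈ pcS Δ i → f z = pcC N r Δ p i := fun i z hz => hf i z hz
  have hmeas : ∀ i : ℤ, MeasurableSet (pcS Δ i) := fun i => measurableSet_Ioo
  have hdisj := pcS_disjoint (Δ := Δ) hΔ
  have hcover := pcS_ae_cover (Δ := Δ) hΔ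
  have hnull : volume (⋃ i, pcS Δ i)ᶜ = 0 := ae_iff.mp hcover
  have hrestrict : volume.restrict (⋃ i, pcS Δ i) = volume := by
    rw [Measure.restrict_congr_set (MeasureTheory.ae_eq_univ.mpr hnull), Measure.restrict_univ]
  -- evenness
  have heven : ∀ᵐ z : ℝ, f (-z) = f z := by
    filter_upwards [hcover] with z hz
    rcases Set.mem_iUnion.mp hz with ⟨i, hzi⟩
    have h1 : f z = pcC N r Δ p i := hfc i z hzi
    have h2 : f (-z) = pcC N r Δ p (-i) := by
      apply hfc (-i) (-z)
      rw [pcS, Set.mem_Ioo] at hzi ⊢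
      push_cast at hzi ⊢
      constructor
      · nlinarith [hzi.2]
      · nlinarith [hzi.1]
    rw [h1, h2, pcC_symm]
  -- mean
  have hmean : (∫ z : ℝ, z * f z) = 0 := by
    have h1 : (∫ z : ℝ, -z * f (-z)) = ∫ z : ℝ, z * f z :=
      integral_neg_eq_self (fun z : ℝ => z * f z) volume
    have h2 : (∫ z : ℝ, -z * f (-z)) = - ∫ z : ℝ, z * f z := by
      rw [← integral_neg]
      apply integral_congr_ae
      filter_upwards [heven] with z hz
      rw [hz]; ring
    linarith [h1.symm.trans h2]
  -- per-piece facts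
  have hle : ∀ i : ℤ, ((i : ℝ) - 1 / 2) * Δ ≤ ((i : ℝ) + 1 / 2) * Δ := by
    intro i; nlinarith
  have hEq : ∀ i : ℤ, Set.EqOn (fun z : ℝ => z ^ 2 * f z)
      (fun z : ℝ => pcC N r Δ p i * z ^ 2) (pcS Δ i) := by
    intro i z hz
    simp only
    rw [hfc i z hz]; ring
  have hint : ∀ i : ℤ, IntegrableOn (fun z : ℝ => z ^ 2 * f z) (pcS Δ i) := by
    intro i
    have hbase : IntegrableOn (fun z : ℝ => pcC N r Δ p i * z ^ 2)
        (Set.Icc (((i : ℝ) - 1 / 2) * Δ) (((i : ℝ) + 1 / 2) * Δ)) :=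
      Continuous.integrableOn_Icc (by continuity)
    exact ((hbase.mono_set Set.Ioo_subset_Icc_self).congr_fun (hEq i).symm (hmeas i))
  have hpieceval : ∀ i : ℤ, (∫ z in pcS Δ i, z ^ 2 * f z) = pcG N r Δ p i := by
    intro i
    rw [setIntegral_congr_fun (hmeas i) (hEq i), MeasureTheory.integral_const_mul]
    have hsq : (∫ z in pcS Δ i, z ^ 2)
        = ((((i : ℝ) + 1 / 2) * Δ) ^ 3 - (((i : ℝ) - 1 / 2) * Δ) ^ 3) / 3 := by
      simp only [pcS]
      rw [← MeasureTheory.integral_Ioc_eq_integral_Ioo,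
        ← intervalIntegral.integral_of_le (hle i), integral_pow]
      norm_num
    rw [hsq]
    unfold pcG
    ring
  have hnormval : ∀ i : ℤ, (∫ z in pcS Δ i, ‖z ^ 2 * f z‖) = pcG N r Δ p i := by
    intro i
    rw [← hpieceval i]
    apply setIntegral_congr_fun (hmeas i)
    intro z hz
    simp only
    rw [hfc i z hz, Real.norm_eq_abs,
      abs_of_nonneg (mul_nonneg (sq_nonneg z) (pcC_nonneg N hr0 hΔ hp i))]
  have HS := pc_hasSum N hN hr0 hr1 hΔ p hp hnorm
  have hsummable : Summable (fun i : ℤ => ∫ z in pcS Δ i, ‖z ^ 2 * f z‖) :=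
    HS.summable.congr fun i => (hnormval i).symm
  have hIU : IntegrableOn (fun z : ℝ => z ^ 2 * f z) (⋃ i, pcS Δ i) :=
    integrableOn_iUnion_of_summable_integral_norm hint hsummable
  have hInt : Integrable (fun z : ℝ => z ^ 2 * f z) := by
    rwa [IntegrableOn, hrestrict] at hIU
  have hsum2 : HasSum (fun i : ℤ => ∫ z in pcS Δ i, z ^ 2 * f z)
      (∫ z in (⋃ i, pcS Δ i), z ^ 2 * f z) := hasSum_integral_iUnion hmeas hdisj hIU
  rw [funext hpieceval] at hsum2
  have hset : (∫ z in (⋃ i, pcS Δ i), z ^ 2 * f z) = ∫ z : ℝ, z ^ 2 * f z := by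
    rw [hrestrict]
  exact ⟨hmean, hInt, by rw [← hset]; exact hsum2.unique HS⟩
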